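/- The ring R = ℂ[A,B,C,D,T]/I_T is an integral domain. -/

import Mathlib

open MvPolynomial

set_option synthInstance.maxHeartbeats 1000000
set_option maxHeartbeats 1000000

/-- Variables: `A = X 0`, `B = X 1`, `C = X 2`, `D = X 3`, `T = X 4`. -/
noncomputable def m₁ : MvPolynomial (Fin 5) ℂ :=
  ((X 0) ^ 2 + (X 4) ^ 5) * (X 0) ^ 2 - X 1 * X 2

noncomputable def m₂ : MvPolynomial (Fin 5) ℂ :=
  ((X 0) ^ 2 + (X 4) ^ 5) * ((X 1) ^ 2 - X 3) - X 2 * X 3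

noncomputable def m₃ : MvPolynomial (Fin 5) ℂ :=
  X 1 * ((X 1) ^ 2 - X 3) - (X 0) ^ 2 * X 3

/-- The ideal generated by the three 2×2 minors of
`[[A² + T⁵, B, D], [C, A², B² − D]]`. -/
noncomputable def I_T : Ideal (MvPolynomial (Fin 5) ℂ) :=
  Ideal.span {m₁, m₂, m₃}

namespace S9
abbrev P5 : Type := MvPolynomial (Fin 5) ℂ
abbrev P3 : Type := MvPolynomial (Fin 3) ℂ
abbrev P2 : Type := MvPolynomial (Fin 2) ℂ
abbrev LL : Type := FractionRing P3
noncomputable section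
instance iAlg : Algebra ℂ LL := inferInstance
instance iTower : IsScalarTower ℂ P3 LL := inferInstance
def ρ : P3 →ₐ[ℂ] P5 := aeval ![X 0, X 1, X 4]
def sg : P2 →ₐ[ℂ] P5 := aeval ![X 0, X 4]
def ι₂ : P2 →ₐ[ℂ] P3 := aeval ![X 0, X 2]
def gg : P3 →+* LL := algebraMap P3 LL
lemma rhoiota : ρ.comp ι₂ = sg := by
  apply algHom_ext; intro i; fin_cases i <;> simp [ρ, sg, ι₂]
def pa : P3 := X 0
def pb : P3 := X 1
def pf : P3 := X 0 ^ 2 + X 2 ^ 5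
def ph : P3 := X 0 ^ 2 + X 1
def vv : Fin 5 → LL := ![gg (X 0), gg (X 1), gg (pf * pa ^ 2) / gg pb, gg (pb ^ 3) / gg ph, gg (X 2)]
def φ : P5 →ₐ[ℂ] LL := aeval vv
lemma ginj : Function.Injective ⇑gg := IsFractionRing.injective P3 LL
lemma hb0 : gg (X 1) ≠ 0 := by
  rw [map_ne_zero_iff gg ginj]; exact X_ne_zero 1
lemma hh0' : gg (X 1) + gg (X 0) ^ 2 ≠ 0 := by
  rw [← map_pow, ← map_add, map_ne_zero_iff gg ginj]
  intro h
  have := congrArg (eval ![0,1,0]) h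
  simp at this
lemma hh0 : gg ph ≠ 0 := by
  simp only [ph, map_add, map_pow]
  intro h; apply hh0'; rw [← h]; ring
lemma φX : ∀ i, φ (X i) = vv i := fun i => aeval_X vv i
lemma φ_m₁ : φ m₁ = 0 := by
  simp only [m₁, map_sub, map_add, map_mul, map_pow, φX]
  show (vv 0 ^2 + vv 4 ^5) * vv 0 ^2 - vv 1 * vv 2 = 0
  simp only [show vv 4 = gg (X 2) from rfl, show vv 3 = gg (pb ^ 3) / gg ph from rfl,
    show vv 2 = gg (pf * pa ^ 2) / gg pb from rfl]
  simp only [vv, Matrix.cons_val_zero, Matrix.cons_val_one, Matrix.head_cons]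
  norm_num [Matrix.cons_val_succ]
  simp only [pf, pa, pb, ph, map_add, map_mul, map_pow]
  field_simp [hb0]
  ring
lemma hh0'' : gg (X 0) ^ 2 + gg (X 1) ≠ 0 := by intro h; apply hh0'; rw [← h]; ring
lemma φ_m₂ : φ m₂ = 0 := by
  simp only [m₂, map_sub, map_add, map_mul, map_pow, φX]
  show (vv 0 ^2 + vv 4 ^5) * (vv 1 ^2 - vv 3) - vv 2 * vv 3 = 0
  simp only [show vv 4 = gg (X 2) from rfl, show vv 3 = gg (pb ^ 3) / gg ph from rfl,
    show vv 2 = gg (pf * pa ^ 2) / gg pb from rfl]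
  simp only [vv, Matrix.cons_val_zero, Matrix.cons_val_one, Matrix.head_cons]
  norm_num [Matrix.cons_val_succ]
  simp only [pf, pa, pb, ph, map_add, map_mul, map_pow]
  field_simp [hb0, hh0', hh0'']
  ring
lemma φ_m₃ : φ m₃ = 0 := by
  simp only [m₃, map_sub, map_add, map_mul, map_pow, φX]
  show vv 1 * (vv 1 ^2 - vv 3) - vv 0 ^2 * vv 3 = 0
  simp only [show vv 4 = gg (X 2) from rfl, show vv 3 = gg (pb ^ 3) / gg ph from rfl,
    show vv 2 = gg (pf * pa ^ 2) / gg pb from rfl]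
  simp only [vv, Matrix.cons_val_zero, Matrix.cons_val_one, Matrix.head_cons]
  norm_num [Matrix.cons_val_succ]
  simp only [pf, pa, pb, ph, map_add, map_mul, map_pow]
  field_simp [hb0, hh0', hh0'']
  ring
def evC (r : Polynomial P2) : P5 := r.eval₂ sg.toRingHom (X 2)
def evD (s : Polynomial P2) : P5 := s.eval₂ sg.toRingHom (X 3)
def NF (p₀ : P3) (r s : Polynomial P2) : P5 := ρ p₀ + X 2 * evC r + X 3 * evD s
def Z : Set P5 := {p | ∃ p₀ r s, p - NF p₀ r s ∈ I_T}

lemma hm₁ : m₁ ∈ I_T := Ideal.subset_span (by simp)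
lemma hm₂ : m₂ ∈ I_T := Ideal.subset_span (by simp)
lemma hm₃ : m₃ ∈ I_T := Ideal.subset_span (by simp)

lemma NF_mem (p₀ : P3) (r s : Polynomial P2) : NF p₀ r s ∈ Z :=
  ⟨p₀, r, s, by rw [sub_self]; exact Ideal.zero_mem _⟩

lemma mem_of_sub_mem {p q : P5} (h : p - q ∈ I_T) (hq : q ∈ Z) : p ∈ Z := by
  obtain ⟨p₀, r, s, h2⟩ := hq
  exact ⟨p₀, r, s, by simpa [sub_add_sub_cancel] using Ideal.add_mem _ h h2⟩

lemma zmem_add {p q : P5} (hp : p ∈ Z) (hq : q ∈ Z) : p + q ∈ Z := by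
  obtain ⟨p₀, r, s, h1⟩ := hp; obtain ⟨q₀, r', s', h2⟩ := hq
  refine ⟨p₀ + q₀, r + r', s + s', ?_⟩
  have hNF : NF (p₀ + q₀) (r + r') (s + s') = NF p₀ r s + NF q₀ r' s' := by
    simp only [NF, map_add, evC, evD, Polynomial.eval₂_add]; ring
  rw [hNF]
  have h3 := Ideal.add_mem _ h1 h2
  convert h3 using 1; ring

lemma zmem_sgmul (u : P2) {p : P5} (hp : p ∈ Z) : sg u * p ∈ Z := by
  obtain ⟨p₀, r, s, h1⟩ := hp
  refine ⟨ι₂ u * p₀, Polynomial.C u * r, Polynomial.C u * s, ?_⟩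
  have hru : ρ (ι₂ u) = sg u := AlgHom.congr_fun rhoiota u
  have hNF : NF (ι₂ u * p₀) (Polynomial.C u * r) (Polynomial.C u * s) = sg u * NF p₀ r s := by
    simp only [NF, map_mul, evC, evD, Polynomial.eval₂_mul, Polynomial.eval₂_C, hru]
    simp only [AlgHom.toRingHom_eq_coe, RingHom.coe_coe]
    ring
  rw [hNF]
  have h3 := Ideal.mul_mem_left _ (sg u) h1
  convert h3 using 1; ring

lemma zmem_smul (c : ℂ) {p : P5} (hp : p ∈ Z) : c • p ∈ Z := by
  have hsc : sg (MvPolynomial.C c) = MvPolynomial.C c := by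
    rw [show (MvPolynomial.C c : P2) = algebraMap ℂ P2 c from rfl, AlgHom.commutes]; rfl
  have : c • p = sg (MvPolynomial.C c) * p := by rw [hsc, C_mul']
  rw [this]; exact zmem_sgmul _ hp

lemma zmem_sub {p q : P5} (hp : p ∈ Z) (hq : q ∈ Z) : p - q ∈ Z := by
  have := zmem_add hp (zmem_smul (-1 : ℂ) hq)
  simpa [neg_one_smul, sub_eq_add_neg] using this

lemma B_pow_mem (k : ℕ) : (X 1 : P5) ^ k ∈ Z := by
  have h : (X 1 : P5) ^ k = NF (X 1 ^ k) 0 0 := by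
    simp [NF, evC, evD, ρ, Polynomial.eval₂_zero, map_pow]
  rw [h]; exact NF_mem _ _ _

lemma C_pow_mem (i : ℕ) : (X 2 : P5) ^ (i + 1) ∈ Z := by
  have h : (X 2 : P5) ^ (i + 1) = NF 0 (Polynomial.X ^ i) 0 := by
    simp [NF, evC, evD, Polynomial.eval₂_zero, Polynomial.eval₂_X_pow, pow_succ]
    ring
  rw [h]; exact NF_mem _ _ _

lemma D_pow_mem (j : ℕ) : (X 3 : P5) ^ (j + 1) ∈ Z := by
  have h : (X 3 : P5) ^ (j + 1) = NF 0 0 (Polynomial.X ^ j) := by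
    simp [NF, evC, evD, Polynomial.eval₂_zero, Polynomial.eval₂_X_pow, pow_succ]
    ring
  rw [h]; exact NF_mem _ _ _

lemma red₁ (k i j : ℕ)
    (h : sg ((X 0 ^ 2 + X 1 ^ 5) * X 0 ^ 2) * (X 1 ^ k * (X 2 ^ i * X 3 ^ j)) ∈ Z) :
    (X 1 : P5) ^ (k + 1) * (X 2 ^ (i + 1) * X 3 ^ j) ∈ Z := by
  apply mem_of_sub_mem ?_ h
  have hsg : sg ((X 0 ^ 2 + X 1 ^ 5) * X 0 ^ 2) = ((X 0 : P5) ^ 2 + X 4 ^ 5) * X 0 ^ 2 := by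
    simp [sg]
  rw [hsg]
  have hid : (X 1 : P5) ^ (k + 1) * (X 2 ^ (i + 1) * X 3 ^ j)
      - ((X 0 : P5) ^ 2 + X 4 ^ 5) * X 0 ^ 2 * (X 1 ^ k * (X 2 ^ i * X 3 ^ j))
      = (-(X 1 ^ k * (X 2 ^ i * X 3 ^ j))) * m₁ := by
    simp only [m₁]; ring
  rw [hid]; exact Ideal.mul_mem_left _ _ hm₁

lemma red₂ (k i j : ℕ)
    (h1 : sg (X 0 ^ 2 + X 1 ^ 5) * (X 1 ^ (k + 2) * (X 2 ^ i * X 3 ^ j)) ∈ Z)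
    (h2 : sg (X 0 ^ 2 + X 1 ^ 5) * (X 1 ^ k * (X 2 ^ i * X 3 ^ (j + 1))) ∈ Z) :
    (X 1 : P5) ^ k * (X 2 ^ (i + 1) * X 3 ^ (j + 1)) ∈ Z := by
  apply mem_of_sub_mem ?_ (zmem_sub h1 h2)
  have hsg : sg ((X 0 : P2) ^ 2 + X 1 ^ 5) = ((X 0 : P5) ^ 2 + X 4 ^ 5) := by simp [sg]
  rw [hsg]
  have hid : (X 1 : P5) ^ k * (X 2 ^ (i + 1) * X 3 ^ (j + 1))
      - (((X 0 : P5) ^ 2 + X 4 ^ 5) * (X 1 ^ (k + 2) * (X 2 ^ i * X 3 ^ j))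
        - ((X 0 : P5) ^ 2 + X 4 ^ 5) * (X 1 ^ k * (X 2 ^ i * X 3 ^ (j + 1))))
      = (-(X 1 ^ k * (X 2 ^ i * X 3 ^ j))) * m₂ := by
    simp only [m₂]; ring
  rw [hid]; exact Ideal.mul_mem_left _ _ hm₂

lemma red₃ (k i j : ℕ)
    (h1 : (X 1 : P5) ^ (k + 3) * (X 2 ^ i * X 3 ^ j) ∈ Z)
    (h2 : sg (X 0 ^ 2) * (X 1 ^ k * (X 2 ^ i * X 3 ^ (j + 1))) ∈ Z) :
    (X 1 : P5) ^ (k + 1) * (X 2 ^ i * X 3 ^ (j + 1)) ∈ Z := by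
  apply mem_of_sub_mem ?_ (zmem_sub h1 h2)
  have hsg : sg ((X 0 : P2) ^ 2) = ((X 0 : P5) ^ 2) := by simp [sg]
  rw [hsg]
  have hid : (X 1 : P5) ^ (k + 1) * (X 2 ^ i * X 3 ^ (j + 1))
      - ((X 1 : P5) ^ (k + 3) * (X 2 ^ i * X 3 ^ j)
        - (X 0 : P5) ^ 2 * (X 1 ^ k * (X 2 ^ i * X 3 ^ (j + 1))))
      = (-(X 1 ^ k * (X 2 ^ i * X 3 ^ j))) * m₃ := by
    simp only [m₃]; ring
  rw [hid]; exact Ideal.mul_mem_left _ _ hm₃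

lemma pow_mem : ∀ n k i j : ℕ, i + j ≤ n → (X 1 : P5) ^ k * (X 2 ^ i * X 3 ^ j) ∈ Z := by
  intro n
  induction n with
  | zero =>
    intro k i j h
    have hi : i = 0 := by omega
    have hj : j = 0 := by omega
    subst hi; subst hj
    simpa using B_pow_mem k
  | succ n ihn =>
    intro k
    induction k with
    | zero =>
      intro i j h
      cases i with
      | zero =>
        cases j with
        | zero => simpa using B_pow_mem 0
        | succ j => simpa using D_pow_mem j
      | succ i =>
        cases j with
        | zero => simpa using C_pow_mem i
        | succ j =>
          exact red₂ 0 i j (zmem_sgmul _ (ihn 2 i j (by omega)))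
            (zmem_sgmul _ (ihn 0 i (j + 1) (by omega)))
    | succ k ihk =>
      intro i j h
      cases i with
      | zero =>
        cases j with
        | zero => simpa using B_pow_mem (k + 1)
        | succ j =>
          exact red₃ k 0 j (ihn (k + 3) 0 j (by omega))
            (zmem_sgmul _ (ihk 0 (j + 1) (by omega)))
      | succ i =>
        cases j with
        | zero => simpa using red₁ k i 0 (zmem_sgmul _ (ihn k i 0 (by omega)))
        | succ j =>
          exact red₂ (k + 1) i j (zmem_sgmul _ (ihn (k + 3) i j (by omega)))
            (zmem_sgmul _ (ihn (k + 1) i (j + 1) (by omega)))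

lemma monomial_mem (u : Fin 5 →₀ ℕ) (c : ℂ) : (monomial u c : P5) ∈ Z := by
  have key : (monomial u c : P5)
      = c • (sg (X 0 ^ u 0 * X 1 ^ u 4) * (X 1 ^ u 1 * (X 2 ^ u 2 * X 3 ^ u 3))) := by
    rw [monomial_eq, Finsupp.prod_pow, Fin.prod_univ_five, ← C_mul']
    have hsg : sg ((X 0 : P2) ^ u 0 * X 1 ^ u 4) = (X 0 : P5) ^ u 0 * X 4 ^ u 4 := by
      simp [sg]
    rw [hsg]; ring
  rw [key]
  exact zmem_smul c (zmem_sgmul _ (pow_mem (u 2 + u 3) (u 1) (u 2) (u 3) le_rfl))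

lemma all_mem (p : P5) : p ∈ Z :=
  induction_on' p monomial_mem fun _ _ hp hq => zmem_add hp hq

lemma gg_apply (x : P3) : gg x = algebraMap P3 LL x := rfl
lemma vv2 : vv 2 = gg (pf * pa ^ 2) / gg pb := rfl

def β : P3 →ₐ[ℂ] P2 := aeval ![X 0, 0, X 1]
def γ : P3 →ₐ[ℂ] P2 := aeval ![X 0, -(X 0 ^ 2), X 1]

lemma φρ (p₀ : P3) : φ (ρ p₀) = gg p₀ := by
  have h : φ.comp ρ = IsScalarTower.toAlgHom ℂ P3 LL := by
    apply algHom_ext; intro i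
    fin_cases i <;> simp [φ, ρ, vv, gg_apply, Matrix.cons_val_succ]
  have h2 := AlgHom.congr_fun h p₀
  simpa [gg] using h2

lemma φsg (u : P2) : φ (sg u) = gg (ι₂ u) := by
  have h : φ.comp sg = (IsScalarTower.toAlgHom ℂ P3 LL).comp ι₂ := by
    apply algHom_ext; intro i
    fin_cases i <;> simp [φ, sg, ι₂, vv, gg_apply, Matrix.cons_val_succ]
  have h2 := AlgHom.congr_fun h u
  simpa [gg] using h2

lemma βι₂ (u : P2) : β (ι₂ u) = u := by
  have h : β.comp ι₂ = AlgHom.id ℂ P2 := by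
    apply algHom_ext; intro i
    fin_cases i <;> simp [β, ι₂]
  simpa using AlgHom.congr_fun h u

lemma γι₂ (u : P2) : γ (ι₂ u) = u := by
  have h : γ.comp ι₂ = AlgHom.id ℂ P2 := by
    apply algHom_ext; intro i
    fin_cases i <;> simp [γ, ι₂]
  simpa using AlgHom.congr_fun h u

def SC (r : Polynomial P2) : P3 :=
  ∑ i ∈ Finset.range (r.natDegree + 1),
    ι₂ (r.coeff i) * (pf * pa ^ 2) ^ (i + 1) * pb ^ (r.natDegree - i)
def SD (s : Polynomial P2) : P3 :=
  ∑ j ∈ Finset.range (s.natDegree + 1),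
    ι₂ (s.coeff j) * pb ^ (3 * (j + 1)) * ph ^ (s.natDegree - j)
def EE (p₀ : P3) (r s : Polynomial P2) : P3 :=
  p₀ * pb ^ (r.natDegree + 1) * ph ^ (s.natDegree + 1)
  + ph ^ (s.natDegree + 1) * SC r + pb ^ (r.natDegree + 1) * SD s

lemma φevC (r : Polynomial P2) : φ (evC r) = r.eval₂ (gg.comp ι₂.toRingHom) (vv 2) := by
  have h := Polynomial.hom_eval₂ r sg.toRingHom φ.toRingHom (X 2)
  have h2 : φ.toRingHom.comp sg.toRingHom = gg.comp ι₂.toRingHom := by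
    apply RingHom.ext; intro u; simpa using φsg u
  rw [evC]
  calc φ (r.eval₂ sg.toRingHom (X 2)) = φ.toRingHom (r.eval₂ sg.toRingHom (X 2)) := rfl
  _ = r.eval₂ (φ.toRingHom.comp sg.toRingHom) (φ.toRingHom (X 2)) := h
  _ = r.eval₂ (gg.comp ι₂.toRingHom) (vv 2) := by rw [h2]; congr 1; exact φX 2

lemma φevD (s : Polynomial P2) : φ (evD s) = s.eval₂ (gg.comp ι₂.toRingHom) (vv 3) := by
  have h := Polynomial.hom_eval₂ s sg.toRingHom φ.toRingHom (X 3)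
  have h2 : φ.toRingHom.comp sg.toRingHom = gg.comp ι₂.toRingHom := by
    apply RingHom.ext; intro u; simpa using φsg u
  rw [evD]
  calc φ (s.eval₂ sg.toRingHom (X 3)) = φ.toRingHom (s.eval₂ sg.toRingHom (X 3)) := rfl
  _ = s.eval₂ (φ.toRingHom.comp sg.toRingHom) (φ.toRingHom (X 3)) := h
  _ = s.eval₂ (gg.comp ι₂.toRingHom) (vv 3) := by rw [h2]; congr 1; exact φX 3

lemma hpb0 : gg pb ≠ 0 := hb0

lemma gb_clear (r : Polynomial P2) :
    gg pb ^ (r.natDegree + 1) * (vv 2 * r.eval₂ (gg.comp ι₂.toRingHom) (vv 2)) = gg (SC r) := by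
  rw [Polynomial.eval₂_eq_sum_range, SC, map_sum, Finset.mul_sum, Finset.mul_sum]
  apply Finset.sum_congr rfl
  intro i hi
  rw [Finset.mem_range] at hi
  have hsplit : gg pb ^ (r.natDegree + 1) = gg pb ^ (i + 1) * gg pb ^ (r.natDegree - i) := by
    rw [← pow_add]; congr 1; omega
  rw [hsplit, map_mul, map_mul, map_pow, map_pow, vv2]
  simp only [RingHom.comp_apply]
  simp only [AlgHom.toRingHom_eq_coe, RingHom.coe_coe, div_pow]
  field_simp [hpb0]
  ring

lemma vv3 : vv 3 = gg (pb ^ 3) / gg ph := rfl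

lemma gh_clear (s : Polynomial P2) :
    gg ph ^ (s.natDegree + 1) * (vv 3 * s.eval₂ (gg.comp ι₂.toRingHom) (vv 3)) = gg (SD s) := by
  rw [Polynomial.eval₂_eq_sum_range, SD, map_sum, Finset.mul_sum, Finset.mul_sum]
  apply Finset.sum_congr rfl
  intro j hj
  rw [Finset.mem_range] at hj
  have hsplit : gg ph ^ (s.natDegree + 1) = gg ph ^ (j + 1) * gg ph ^ (s.natDegree - j) := by
    rw [← pow_add]; congr 1; omega
  rw [hsplit, map_mul, map_mul, map_pow, map_pow, vv3]
  simp only [RingHom.comp_apply]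
  have hpow : gg pb ^ (3 * (j + 1)) = gg (pb ^ 3) ^ (j + 1) := by
    rw [map_pow, ← pow_mul]
  rw [hpow]
  simp only [AlgHom.toRingHom_eq_coe, RingHom.coe_coe, div_pow]
  field_simp [hh0]
  ring

lemma gEE (p₀ : P3) (r s : Polynomial P2) :
    gg (EE p₀ r s) = gg pb ^ (r.natDegree + 1) * gg ph ^ (s.natDegree + 1) * φ (NF p₀ r s) := by
  have hNF : φ (NF p₀ r s) = gg p₀ + vv 2 * (r.eval₂ (gg.comp ι₂.toRingHom) (vv 2))
      + vv 3 * (s.eval₂ (gg.comp ι₂.toRingHom) (vv 3)) := by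
    rw [NF, map_add, map_add, φρ, map_mul, map_mul, φX, φX, φevC, φevD]
  rw [hNF, EE]
  simp only [map_add, map_mul, map_pow]
  rw [← gb_clear, ← gh_clear]
  ring

lemma EE_zero {p₀ : P3} {r s : Polynomial P2} (h : φ (NF p₀ r s) = 0) : EE p₀ r s = 0 := by
  apply ginj; rw [map_zero, gEE, h, mul_zero]

lemma hf2 : ((X 0 : P2) ^ 2 + X 1 ^ 5) ≠ 0 := by
  intro h
  have := congrArg (eval ![1, 0]) h
  simp at this

lemma r_eq_zero {p₀ : P3} {r s : Polynomial P2} (h : EE p₀ r s = 0) : r = 0 := by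
  by_contra hr
  have h2 := congrArg β h
  rw [map_zero] at h2
  have hβpb : β pb = 0 := by simp [β, pb]
  have hβph : β ph = X 0 ^ 2 := by simp [β, ph]
  have hβpf : β pf = X 0 ^ 2 + X 1 ^ 5 := by simp [β, pf, Matrix.cons_val_succ]
  have hβpa : β pa = X 0 := by simp [β, pa]
  simp only [EE, map_add, map_mul, map_pow, hβpb, hβph, hβpf, hβpa] at h2
  simp only [ne_eq, Nat.succ_ne_zero, not_false_eq_true, zero_pow, zero_mul, mul_zero,
    add_zero, zero_add] at h2
  -- h2 : (X 0 ^ 2) ^ (s.natDegree + 1) * β (SC r) = 0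
  have hβSC : β (SC r) = r.coeff r.natDegree * ((X 0 ^ 2 + X 1 ^ 5) * X 0 ^ 2) ^ (r.natDegree + 1) := by
    rw [SC, map_sum]
    rw [Finset.sum_eq_single r.natDegree]
    · simp only [map_mul, map_pow, hβpb, hβpf, hβpa, βι₂, Nat.sub_self, pow_zero, mul_one]
    · intro b hb hbne
      rw [Finset.mem_range] at hb
      simp only [map_mul, map_pow, hβpb]
      rw [zero_pow (by omega : r.natDegree - b ≠ 0), mul_zero]
    · intro hn; exact absurd (Finset.self_mem_range_succ r.natDegree) hn
  rw [hβSC] at h2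
  have hX0 : (X 0 : P2) ≠ 0 := X_ne_zero 0
  have hne : ((X 0 : P2) ^ 2) ^ (s.natDegree + 1) ≠ 0 := pow_ne_zero _ (pow_ne_zero _ hX0)
  have hne2 : (((X 0 : P2) ^ 2 + X 1 ^ 5) * X 0 ^ 2) ^ (r.natDegree + 1) ≠ 0 :=
    pow_ne_zero _ (mul_ne_zero hf2 (pow_ne_zero _ hX0))
  have : r.coeff r.natDegree = 0 := by
    rcases mul_eq_zero.mp h2 with h' | h'
    · exact absurd h' hne
    · rcases mul_eq_zero.mp h' with h'' | h''
      · exact h''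
      · exact absurd h'' hne2
  exact hr (Polynomial.leadingCoeff_eq_zero.mp this)

lemma SC_zero : SC 0 = 0 := by simp [SC]
lemma SD_zero : SD 0 = 0 := by simp [SD]

lemma hph3 : (ph : P3) ≠ 0 := by
  intro h
  have := congrArg (eval ![0, 1, 0]) h
  simp [ph] at this

lemma s_eq_zero {p₀ : P3} {s : Polynomial P2} (h : EE p₀ 0 s = 0) : s = 0 := by
  by_contra hs
  rw [EE, SC_zero, mul_zero, add_zero, Polynomial.natDegree_zero, zero_add, pow_one] at h
  have hfac : pb * (p₀ * ph ^ (s.natDegree + 1) + SD s) = 0 := by rw [← h]; ring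
  have hF : p₀ * ph ^ (s.natDegree + 1) + SD s = 0 := by
    rcases mul_eq_zero.mp hfac with h' | h'
    · exact absurd h' (X_ne_zero 1)
    · exact h'
  have h2 := congrArg γ hF
  rw [map_zero, map_add, map_mul, map_pow] at h2
  have hγph : γ ph = 0 := by simp [γ, ph]
  have hγpb : γ pb = -(X 0 ^ 2) := by simp [γ, pb]
  rw [hγph, zero_pow (Nat.succ_ne_zero _), mul_zero, zero_add] at h2
  have hγSD : γ (SD s) = s.coeff s.natDegree * (-(X 0 ^ 2)) ^ (3 * (s.natDegree + 1)) := by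
    rw [SD, map_sum]
    rw [Finset.sum_eq_single s.natDegree]
    · simp only [map_mul, map_pow, hγpb, hγph, γι₂, Nat.sub_self, pow_zero, mul_one]
    · intro b hb hbne
      rw [Finset.mem_range] at hb
      simp only [map_mul, map_pow, hγph]
      rw [zero_pow (by omega : s.natDegree - b ≠ 0), mul_zero]
    · intro hn; exact absurd (Finset.self_mem_range_succ s.natDegree) hn
  rw [hγSD] at h2
  have hne : ((-(X 0 ^ 2) : P2)) ^ (3 * (s.natDegree + 1)) ≠ 0 :=
    pow_ne_zero _ (neg_ne_zero.mpr (pow_ne_zero _ (X_ne_zero 0)))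
  have : s.coeff s.natDegree = 0 := by
    rcases mul_eq_zero.mp h2 with h' | h'
    · exact h'
    · exact absurd h' hne
  exact hs (Polynomial.leadingCoeff_eq_zero.mp this)

lemma p0_eq_zero {p₀ : P3} (h : EE p₀ 0 0 = 0) : p₀ = 0 := by
  rw [EE, SC_zero, SD_zero, mul_zero, mul_zero, add_zero, add_zero,
    Polynomial.natDegree_zero, zero_add, pow_one, pow_one] at h
  rcases mul_eq_zero.mp h with h' | h'
  · rcases mul_eq_zero.mp h' with h'' | h''
    · exact h''
    · exact absurd h'' (X_ne_zero 1)
  · exact absurd h' hph3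

lemma NF_zero {p₀ : P3} {r s : Polynomial P2} (h : φ (NF p₀ r s) = 0) : NF p₀ r s = 0 := by
  have hr : r = 0 := r_eq_zero (EE_zero h)
  subst hr
  have hs : s = 0 := s_eq_zero (EE_zero h)
  subst hs
  have hp : p₀ = 0 := p0_eq_zero (EE_zero h)
  subst hp
  simp [NF, evC, evD, Polynomial.eval₂_zero]

lemma hker : I_T ≤ RingHom.ker φ.toRingHom := by
  rw [I_T, Ideal.span_le]
  intro x hx
  simp only [Set.mem_insert_iff, Set.mem_singleton_iff] at hx
  rcases hx with rfl | rfl | rfl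
  · simpa [RingHom.mem_ker] using φ_m₁
  · simpa [RingHom.mem_ker] using φ_m₂
  · simpa [RingHom.mem_ker] using φ_m₃

lemma ker_le : RingHom.ker φ.toRingHom ≤ I_T := by
  intro p hp
  obtain ⟨p₀, r, s, hd⟩ := all_mem p
  have hφd : φ (p - NF p₀ r s) = 0 := by
    have := hker hd
    simpa [RingHom.mem_ker] using this
  have hφp : φ p = 0 := by simpa [RingHom.mem_ker] using hp
  have h0 : φ (NF p₀ r s) = 0 := by
    rw [map_sub, hφp, zero_sub, neg_eq_zero] at hφd
    exact hφd
  rwa [NF_zero h0, sub_zero] at hd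

end
end S9


/-- The ring `R = ℂ[A,B,C,D,T]/I_T` is an integral domain. -/
theorem stmt_9 : IsDomain (MvPolynomial (Fin 5) ℂ ⧸ I_T) := by
  rw [Ideal.Quotient.isDomain_iff_prime]
  have h : I_T = RingHom.ker S9.φ.toRingHom := le_antisymm S9.hker S9.ker_le
  rw [h]
  exact RingHom.ker_isPrime _
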